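/- Let k ≥ 0 be a natural number. For every finite set C of points on the unit circle S^1 ⊂ ℝ^2, Σ_{(c,c') ∈ C×C} T_k(⟨c,c'⟩) ≥ 0, where T_k is the Chebyshev polynomial of the first kind of degree k. -/

import Mathlib

open scoped RealInnerProductSpace

/-- The Chebyshev polynomials of the first kind, defined by `T_0(t) = 1`, `T_1(t) = t`,
and `T_k(t) = 2t T_{k-1}(t) − T_{k-2}(t)` for `k ≥ 2`. -/
def chebT : ℕ → ℝ → ℝ
  | 0, _ => 1
  | 1, t => t
  | (k + 2), t => 2 * t * chebT (k + 1) t - chebT k t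

lemma chebT_cos (k : ℕ) (x : ℝ) : chebT k (Real.cos x) = Real.cos (k * x) := by
  induction k using Nat.strong_induction_on with
  | _ k ih =>
    match k with
    | 0 => simp [chebT]
    | 1 => simp [chebT]
    | (k + 2) =>
      have h1 := ih (k + 1) (by omega)
      have h0 := ih k (by omega)
      have key : Real.cos ((k + 2 : ℕ) * x) =
          2 * Real.cos x * Real.cos ((k + 1 : ℕ) * x) - Real.cos (k * x) := by
        have := Real.cos_add ((k + 1 : ℕ) * x) x
        have := Real.cos_sub ((k + 1 : ℕ) * x) x
        push_cast
        have e1 : ((k : ℝ) + 2) * x = ((k : ℝ) + 1) * x + x := by ring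
        have e2 : (k : ℝ) * x = ((k : ℝ) + 1) * x - x := by ring
        rw [e1, e2, Real.cos_add, Real.cos_sub]
        ring
      show 2 * Real.cos x * chebT (k + 1) (Real.cos x) - chebT k (Real.cos x) = _
      rw [h1, h0, key]

/-- Positivity property of the Chebyshev polynomials on the unit circle: for every finite set
`C` of points on `S^1 ⊂ ℝ^2`, `∑_{(c,c') ∈ C×C} T_k(⟪c,c'⟫) ≥ 0`. -/
theorem chebT_positivity (k : ℕ)
    (C : Finset (EuclideanSpace ℝ (Fin 2))) (hC : ∀ c ∈ C, ⟪c, c⟫ = (1 : ℝ)) :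
    0 ≤ ∑ c ∈ C, ∑ c' ∈ C, chebT k ⟪c, c'⟫ := by
  have hx : ∀ c : EuclideanSpace ℝ (Fin 2), ∃ θ : ℝ,
      c ∈ C → c 0 = Real.cos θ ∧ c 1 = Real.sin θ := by
    intro c
    by_cases hc : c ∈ C
    · have h := hC c hc
      rw [PiLp.inner_apply] at h
      simp [Fin.sum_univ_two] at h
      have habs : ‖(⟨c 0, c 1⟩ : ℂ)‖ = 1 := by
        rw [Complex.norm_def, Complex.normSq_mk]
        rw [show c 0 * c 0 + c 1 * c 1 = 1 by linarith]
        simp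
      have hz : (⟨c 0, c 1⟩ : ℂ) ≠ 0 := by
        intro h0; rw [h0] at habs; simp at habs
      refine ⟨Complex.arg ⟨c 0, c 1⟩, fun _ => ⟨?_, ?_⟩⟩
      · have := Complex.cos_arg hz
        rw [habs] at this; simpa using this.symm
      · have := Complex.sin_arg (⟨c 0, c 1⟩ : ℂ)
        rw [habs] at this; simpa using this.symm
    · exact ⟨0, fun h => absurd h hc⟩
  choose θ hθ using hx
  have key : ∀ c ∈ C, ∀ c' ∈ C, chebT k ⟪c, c'⟫ =
      Real.cos (k * θ c) * Real.cos (k * θ c') +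
      Real.sin (k * θ c) * Real.sin (k * θ c') := by
    intro c hc c' hc'
    obtain ⟨h1, h2⟩ := hθ c hc
    obtain ⟨h1', h2'⟩ := hθ c' hc'
    have hip : ⟪c, c'⟫ = Real.cos (θ c - θ c') := by
      rw [PiLp.inner_apply]
      simp only [Fin.sum_univ_two, RCLike.inner_apply, conj_trivial]
      rw [h1, h2, h1', h2', Real.cos_sub]
      ring
    rw [hip, chebT_cos, mul_sub, Real.cos_sub]
  rw [Finset.sum_congr rfl fun c hc => Finset.sum_congr rfl fun c' hc' => key c hc c' hc']
  have : ∑ c ∈ C, ∑ c' ∈ C,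
      (Real.cos (k * θ c) * Real.cos (k * θ c') +
       Real.sin (k * θ c) * Real.sin (k * θ c')) =
      (∑ c ∈ C, Real.cos (k * θ c))^2 + (∑ c ∈ C, Real.sin (k * θ c))^2 := by
    simp only [Finset.sum_add_distrib, ← Finset.sum_mul, ← Finset.mul_sum, sq]
  rw [this]
  positivity
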